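/- Let α_R, α_F ∈ [0,1), let R be the real 2×2 matrix with rows (1, −α_R) and (−α_F, 1), and let θ := π/2 + max(arctan(α_F), arctan(α_R)). Then for all z, w ∈ ℝ² with z₁w₁ ≥ 0 and z₂w₂ ≥ 0, it holds that ⟨z, Rw⟩ ≥ cos(θ)·‖z‖·‖Rw‖ (with the Euclidean inner product and norm on ℝ²). Moreover, this bound is tight: it is attained with equality for some such z, w (e.g. z = (0,1), w = (1,0) when α_F ≥ α_R). -/

import Mathlib

lemma key0 (aR aF m a b p q : ℝ) (hR0 : 0 ≤ aR) (hRm : aR ≤ m)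
    (hF0 : 0 ≤ aF) (hFm : aF ≤ m) (hm : m < 1)
    (hp : 0 ≤ p) (hq : 0 ≤ q) (hab : a * b = p * q)
    (hI : p + q - aR * a - aF * b ≤ 0) (hba : b ≤ a) :
    0 ≤ m * (a - b - aF * p + aR * q) + (p + q - aR * a - aF * b) := by
  have hm0 : 0 ≤ m := hR0.trans hRm
  rcases le_or_gt b 0 with hb0 | hb0
  · rcases le_or_gt 0 a with ha0 | ha0
    · nlinarith [mul_nonneg ha0 (sub_nonneg.2 hRm),
        mul_nonneg (neg_nonneg.2 hb0) (by nlinarith : (0:ℝ) ≤ m + aF),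
        mul_nonneg hp (by nlinarith : (0:ℝ) ≤ 1 - m * aF),
        mul_nonneg hq (by nlinarith : (0:ℝ) ≤ 1 + m * aR)]
    · exfalso
      have hbneg : b < 0 := lt_of_le_of_lt hba ha0
      have h1 : aR * a ≤ 0 := mul_nonpos_of_nonneg_of_nonpos hR0 ha0.le
      have h2 : aF * b ≤ 0 := mul_nonpos_of_nonneg_of_nonpos hF0 hbneg.le
      have hp0 : p = 0 := le_antisymm (by linarith) hp
      have hq0 : q = 0 := le_antisymm (by linarith) hq
      have : 0 < a * b := mul_pos_of_neg_of_neg ha0 hbneg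
      rw [hab, hp0, hq0] at this; simp at this
  · have ha0 : 0 < a := lt_of_lt_of_le hb0 hba
    have hpq : 0 < p * q := by rw [← hab]; positivity
    have hp0 : 0 < p := by by_contra h; push_neg at h; nlinarith
    have h1maF : (0:ℝ) ≤ 1 - m * aF := by
      nlinarith [mul_nonneg hm0 (sub_nonneg.2 hFm), mul_nonneg hm0 (sub_nonneg.2 hm.le)]
    rcases le_or_gt (aF * p) a with hAY | hAY
    · -- case A
      have h5 : 0 ≤ p * (aR * a - p) := by
        nlinarith [mul_nonneg hp0.le (neg_nonneg.2 hI),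
          mul_nonneg hb0.le (sub_nonneg.2 hAY)]
      have hX : 0 ≤ aR * a - p := by nlinarith
      have hcoef : (0:ℝ) ≤ a * (m - aR) + p * (1 - m * aF) := by
        nlinarith [mul_nonneg ha0.le (sub_nonneg.2 hRm), mul_nonneg hp0.le h1maF]
      have h6 : m * aR * (a * b) = m * aR * (p * q) := by rw [hab]
      nlinarith [h6, mul_nonneg (mul_nonneg hm0 hb0.le) hX,
        mul_nonneg hp0.le hcoef,
        mul_nonneg hb0.le (sub_nonneg.2 hAY), hp0]
    · -- case B impossible
      exfalso
      nlinarith [mul_nonneg (sub_nonneg.2 hba) (sub_pos.2 hAY).le,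
        sq_nonneg (p - a), mul_pos hp0 ha0,
        mul_nonneg hp0.le (neg_nonneg.2 hI),
        mul_nonneg (mul_pos hp0 ha0).le (by nlinarith : (0:ℝ) ≤ 2 - aR - aF)]

lemma sqle (M J : ℝ) (h1 : 0 ≤ M + J) (h2 : J ≤ 0) : J ^ 2 ≤ M ^ 2 := by
  nlinarith [mul_nonneg h1 (by linarith : (0:ℝ) ≤ M - J)]

lemma absle (X Y : ℝ) (hX : 0 ≤ X) (hY : 0 ≤ Y) (h : Y ^ 2 ≤ X ^ 2) : Y ≤ X := by
  nlinarith

/-- The Ebers–Moll matrix with rows `(1, -αR)` and `(-αF, 1)`, applied to a vector of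
`ℝ²` (with the Euclidean inner product and norm). -/
noncomputable def applyEM (aR aF : ℝ) (w : EuclideanSpace ℝ (Fin 2)) :
    EuclideanSpace ℝ (Fin 2) :=
  (WithLp.equiv 2 (Fin 2 → ℝ)).symm
    ((Matrix.of ![![1, -aR], ![-aF, 1]]).mulVec (WithLp.equiv 2 (Fin 2 → ℝ) w))

lemma applyEM_apply0 (aR aF : ℝ) (w : EuclideanSpace ℝ (Fin 2)) :
    applyEM aR aF w 0 = w 0 - aR * w 1 := by
  simp [applyEM, Matrix.mulVec, dotProduct, Fin.sum_univ_two, Matrix.vecHead, Matrix.vecTail]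
  ring

lemma applyEM_apply1 (aR aF : ℝ) (w : EuclideanSpace ℝ (Fin 2)) :
    applyEM aR aF w 1 = w 1 - aF * w 0 := by
  simp [applyEM, Matrix.mulVec, dotProduct, Fin.sum_univ_two, Matrix.vecHead, Matrix.vecTail]
  ring

lemma inner_applyEM (aR aF : ℝ) (z w : EuclideanSpace ℝ (Fin 2)) :
    (inner ℝ z (applyEM aR aF w) : ℝ) =
      z 0 * (w 0 - aR * w 1) + z 1 * (w 1 - aF * w 0) := by
  simp [PiLp.inner_apply, RCLike.inner_apply, Fin.sum_univ_two,
    applyEM_apply0, applyEM_apply1, mul_comm]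

lemma norm_applyEM (aR aF : ℝ) (w : EuclideanSpace ℝ (Fin 2)) :
    ‖applyEM aR aF w‖ =
      Real.sqrt ((w 0 - aR * w 1) ^ 2 + (w 1 - aF * w 0) ^ 2) := by
  rw [EuclideanSpace.norm_eq]
  simp [Fin.sum_univ_two, sq_abs, applyEM_apply0, applyEM_apply1]

lemma norm_eucl (z : EuclideanSpace ℝ (Fin 2)) :
    ‖z‖ = Real.sqrt (z 0 ^ 2 + z 1 ^ 2) := by
  rw [EuclideanSpace.norm_eq]
  simp [Fin.sum_univ_two, sq_abs]

set_option maxHeartbeats 1000000 in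
theorem stmt_11 (aR aF : ℝ) (haR : aR ∈ Set.Ico (0 : ℝ) 1) (haF : aF ∈ Set.Ico (0 : ℝ) 1) :
    (∀ z w : EuclideanSpace ℝ (Fin 2), z 0 * w 0 ≥ 0 → z 1 * w 1 ≥ 0 →
      (inner ℝ z (applyEM aR aF w) : ℝ) ≥
        Real.cos (Real.pi / 2 + max (Real.arctan aF) (Real.arctan aR)) *
          (‖z‖ * ‖applyEM aR aF w‖)) ∧
    (∃ z w : EuclideanSpace ℝ (Fin 2), z 0 * w 0 ≥ 0 ∧ z 1 * w 1 ≥ 0 ∧ z ≠ 0 ∧ w ≠ 0 ∧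
      (inner ℝ z (applyEM aR aF w) : ℝ) =
        Real.cos (Real.pi / 2 + max (Real.arctan aF) (Real.arctan aR)) *
          (‖z‖ * ‖applyEM aR aF w‖)) := by
  obtain ⟨hR0, hR1⟩ := haR
  obtain ⟨hF0, hF1⟩ := haF
  set m : ℝ := max aF aR with hmdef
  have hRm : aR ≤ m := le_max_right _ _
  have hFm : aF ≤ m := le_max_left _ _
  have hm0 : 0 ≤ m := hF0.trans hFm
  have hm1 : m < 1 := max_lt hF1 hR1
  have hcos : Real.cos (Real.pi / 2 + max (Real.arctan aF) (Real.arctan aR)) =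
      -(m / Real.sqrt (1 + m ^ 2)) := by
    rw [← Real.arctan_strictMono.monotone.map_max, add_comm,
      Real.cos_add_pi_div_two, Real.sin_arctan]
  have hs0 : (0:ℝ) < Real.sqrt (1 + m ^ 2) := Real.sqrt_pos.2 (by positivity)
  have hss : Real.sqrt (1 + m ^ 2) ^ 2 = 1 + m ^ 2 := Real.sq_sqrt (by positivity)
  constructor
  · intro z w hz0 hz1
    rw [hcos, inner_applyEM, norm_applyEM, norm_eucl]
    set I : ℝ := z 0 * (w 0 - aR * w 1) + z 1 * (w 1 - aF * w 0) with hIdef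
    set A : ℝ := z 0 ^ 2 + z 1 ^ 2 with hAdef
    set B : ℝ := (w 0 - aR * w 1) ^ 2 + (w 1 - aF * w 0) ^ 2 with hBdef
    have hA0 : 0 ≤ A := by positivity
    have hB0 : 0 ≤ B := by positivity
    rcases le_or_gt 0 I with hI0 | hI0
    · have : -(m / Real.sqrt (1 + m ^ 2)) * (Real.sqrt A * Real.sqrt B) ≤ 0 :=
        mul_nonpos_of_nonpos_of_nonneg
          (neg_nonpos.2 (div_nonneg hm0 hs0.le))
          (mul_nonneg (Real.sqrt_nonneg _) (Real.sqrt_nonneg _))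
      linarith
    · -- I < 0
      set M : ℝ := m * (z 0 * (w 1 - aF * w 0) - z 1 * (w 0 - aR * w 1)) with hMdef
      have hsq : I ^ 2 ≤ M ^ 2 := by
        rcases le_total (z 1 * w 0) (z 0 * w 1) with hba | hba
        · have h := key0 aR aF m (z 0 * w 1) (z 1 * w 0) (z 0 * w 0) (z 1 * w 1)
            hR0 hRm hF0 hFm hm1 hz0 hz1 (by ring) (by nlinarith [hI0.le]) hba
          exact sqle M I (by nlinarith [h]) hI0.le
        · have h := key0 aF aR m (z 1 * w 0) (z 0 * w 1) (z 1 * w 1) (z 0 * w 0)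
            hF0 hFm hR0 hRm hm1 hz1 hz0 (by ring) (by nlinarith [hI0.le]) hba
          have := sqle (-M) I (by nlinarith [h]) hI0.le
          nlinarith [this]
      have hABid : m ^ 2 * (A * B) = m ^ 2 * I ^ 2 + M ^ 2 := by
        rw [hAdef, hBdef, hIdef, hMdef]; ring
      have h7 : (1 + m ^ 2) * I ^ 2 ≤ m ^ 2 * (A * B) := by nlinarith [hsq, hABid]
      have key : -I * Real.sqrt (1 + m ^ 2) ≤ m * (Real.sqrt A * Real.sqrt B) :=
        absle (m * (Real.sqrt A * Real.sqrt B)) (-I * Real.sqrt (1 + m ^ 2))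
          (mul_nonneg hm0 (mul_nonneg (Real.sqrt_nonneg _) (Real.sqrt_nonneg _)))
          (mul_nonneg (by linarith) hs0.le)
          (by
            have hXsq : (m * (Real.sqrt A * Real.sqrt B)) ^ 2 = m ^ 2 * (A * B) := by
              rw [mul_pow, mul_pow, Real.sq_sqrt hA0, Real.sq_sqrt hB0]
            have hYsq : (-I * Real.sqrt (1 + m ^ 2)) ^ 2 = (1 + m ^ 2) * I ^ 2 := by
              rw [mul_pow, hss]; ring
            linarith [h7, hXsq, hYsq])
      have heq : -(m / Real.sqrt (1 + m ^ 2)) * (Real.sqrt A * Real.sqrt B) =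
          -(m * (Real.sqrt A * Real.sqrt B)) / Real.sqrt (1 + m ^ 2) := by ring
      rw [ge_iff_le, heq, neg_div, neg_le, le_div_iff₀ hs0]
      linarith [key]
  · rcases le_total aR aF with hc | hc
    · -- m = aF : z = (0,1), w = (1,0)
      have hmF : m = aF := max_eq_left hc
      refine ⟨(WithLp.equiv 2 (Fin 2 → ℝ)).symm ![0,1],
        (WithLp.equiv 2 (Fin 2 → ℝ)).symm ![1,0], ?_, ?_, ?_, ?_, ?_⟩
      · simp [WithLp.equiv_symm_apply, PiLp.toLp_apply]
      · simp [WithLp.equiv_symm_apply, PiLp.toLp_apply]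
      · intro h
        have h1 : ((WithLp.equiv 2 (Fin 2 → ℝ)).symm ![(0:ℝ),1] :
            EuclideanSpace ℝ (Fin 2)) 1 = 1 := by simp [WithLp.equiv_symm_apply, PiLp.toLp_apply]
        rw [h] at h1
        simp at h1
      · intro h
        have h1 : ((WithLp.equiv 2 (Fin 2 → ℝ)).symm ![(1:ℝ),0] :
            EuclideanSpace ℝ (Fin 2)) 0 = 1 := by simp [WithLp.equiv_symm_apply, PiLp.toLp_apply]
        rw [h] at h1
        simp at h1
      · rw [hcos, inner_applyEM, norm_applyEM, norm_eucl, hmF]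
        simp [WithLp.equiv_symm_apply, PiLp.toLp_apply]
        have h2 : (0:ℝ) < Real.sqrt (1 + aF ^ 2) := Real.sqrt_pos.2 (by positivity)
        field_simp
    · -- m = aR : z = (1,0), w = (0,1)
      have hmR : m = aR := max_eq_right hc
      refine ⟨(WithLp.equiv 2 (Fin 2 → ℝ)).symm ![1,0],
        (WithLp.equiv 2 (Fin 2 → ℝ)).symm ![0,1], ?_, ?_, ?_, ?_, ?_⟩
      · simp [WithLp.equiv_symm_apply, PiLp.toLp_apply]
      · simp [WithLp.equiv_symm_apply, PiLp.toLp_apply]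
      · intro h
        have h1 : ((WithLp.equiv 2 (Fin 2 → ℝ)).symm ![(1:ℝ),0] :
            EuclideanSpace ℝ (Fin 2)) 0 = 1 := by simp [WithLp.equiv_symm_apply, PiLp.toLp_apply]
        rw [h] at h1
        simp at h1
      · intro h
        have h1 : ((WithLp.equiv 2 (Fin 2 → ℝ)).symm ![(0:ℝ),1] :
            EuclideanSpace ℝ (Fin 2)) 1 = 1 := by simp [WithLp.equiv_symm_apply, PiLp.toLp_apply]
        rw [h] at h1
        simp at h1
      · rw [hcos, inner_applyEM, norm_applyEM, norm_eucl, hmR]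
        simp [WithLp.equiv_symm_apply, PiLp.toLp_apply]
        have h2 : (0:ℝ) < Real.sqrt (1 + aR ^ 2) := Real.sqrt_pos.2 (by positivity)
        rw [show aR ^ 2 + (1:ℝ) = 1 + aR ^ 2 by ring]
        field_simp
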